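/- Let k be a field, ι an additive commutative group, and S a commutative k-algebra equipped with a grading 𝒜 : ι → Submodule_k S making S a graded k-algebra. Fix a positive integer m, and let S^{(m)} be the m-th Veronese subalgebra of S, i.e. the k-subalgebra whose underlying k-submodule is the sum over all γ ∈ ι of the graded pieces 𝒜(m·γ). If S is a k-algebra of finite type, then S is a finitely generated S^{(m)}-module and S^{(m)} is a k-algebra of finite type. -/

import Mathlib

/-- Let `k` be a field, `ι` an additive commutative group, and `S` a commutative
`k`-algebra equipped with a grading `𝒜 : ι → Submodule k S` making `S` a graded `k`-algebra.
Fix a positive integer `m`, and let `V = S^{(m)}` be the `m`-th Veronese subalgebra of `S`,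
i.e. the `k`-subalgebra whose underlying `k`-submodule is the sum over all `γ ∈ ι` of the
graded pieces `𝒜 (m • γ)`. If `S` is a `k`-algebra of finite type, then `S` is a finitely
generated `S^{(m)}`-module and `S^{(m)}` is a `k`-algebra of finite type. -/
theorem veronese_subalgebra_finite_and_finiteType
    (k ι S : Type*) [Field k] [AddCommGroup ι] [DecidableEq ι]
    [CommRing S] [Algebra k S] (𝒜 : ι → Submodule k S) [GradedAlgebra 𝒜]
    (m : ℕ) (hm : 0 < m)
    (V : Subalgebra k S)
    (hV : Subalgebra.toSubmodule V = ⨆ γ : ι, 𝒜 (m • γ))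
    (hS : Algebra.FiniteType k S) :
    Module.Finite V S ∧ Algebra.FiniteType k V := by
  classical
  -- every homogeneous element is integral over V
  have key : ∀ x : S, (∃ γ : ι, x ∈ 𝒜 γ) → IsIntegral V x := by
    rintro x ⟨γ, hx⟩
    have hxm : x ^ m ∈ V := by
      have h1 : x ^ m ∈ 𝒜 (m • γ) := SetLike.pow_mem_graded m hx
      have h2 : 𝒜 (m • γ) ≤ ⨆ γ : ι, 𝒜 (m • γ) := le_iSup (fun γ : ι => 𝒜 (m • γ)) γ
      have : x ^ m ∈ Subalgebra.toSubmodule V := by rw [hV]; exact h2 h1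
      exact this
    refine ⟨Polynomial.X ^ m - Polynomial.C ⟨x ^ m, hxm⟩,
      Polynomial.monic_X_pow_sub_C _ hm.ne', ?_⟩
    simp [Polynomial.eval₂_sub, Polynomial.eval₂_pow, sub_eq_zero]
  -- homogeneous generators
  obtain ⟨t, ht⟩ := hS.out
  set u : Finset S := t.biUnion (fun x => (DirectSum.decompose 𝒜 x).support.image
      (fun γ => ((DirectSum.decompose 𝒜 x) γ : S))) with hu
  set s : Set S := (u : Set S) with hs
  have hsfin : s.Finite := u.finite_toSet
  have hshom : ∀ x ∈ s, ∃ γ : ι, x ∈ 𝒜 γ := by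
    intro x hx
    obtain ⟨y, hy, hx⟩ := Finset.mem_biUnion.1 (Finset.mem_coe.1 hx)
    obtain ⟨γ, -, rfl⟩ := Finset.mem_image.1 hx
    exact ⟨γ, ((DirectSum.decompose 𝒜 y) γ).2⟩
  -- S is generated over V by s
  have hadj : Algebra.adjoin V s = ⊤ := by
    rw [eq_top_iff]
    have hk : Algebra.adjoin k s = ⊤ := by
      rw [eq_top_iff, ← ht]
      apply Algebra.adjoin_le
      intro x hx
      rw [← DirectSum.sum_support_decompose 𝒜 x]
      apply Subalgebra.sum_mem
      intro γ hγ
      apply Algebra.subset_adjoin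
      exact Finset.mem_coe.2 (Finset.mem_biUnion.2 ⟨x, hx, Finset.mem_image_of_mem _ hγ⟩)
    have : Algebra.adjoin k s ≤ (Algebra.adjoin V s).restrictScalars k :=
      Algebra.adjoin_le (fun x hx =>
        (Subalgebra.mem_restrictScalars k).2 (Algebra.subset_adjoin hx))
    rw [hk] at this
    intro x _
    exact this (show x ∈ (⊤ : Subalgebra k S) from trivial)
  have hfin : Module.Finite V S := by
    have hfg : (Subalgebra.toSubmodule (Algebra.adjoin V s)).FG :=
      fg_adjoin_of_finite hsfin (fun x hx => key x (hshom x hx))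
    rw [hadj] at hfg
    exact ⟨hfg⟩
  refine ⟨hfin, ?_⟩
  constructor
  exact fg_of_fg_of_fg k V S hS.out hfin.fg_top Subtype.val_injective
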